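/- Retrodicting a Z-basis measurement with the Pauli-eigenstate ensemble belief: let S be a qubit, E_{0/1} the CPTP map from S to a two-dimensional classical system T given by E_{0/1}(ρ) = ⟨0|ρ|0⟩ |0̃⟩⟨0̃| + ⟨1|ρ|1⟩ |1̃⟩⟨1̃|, and let β_XYZ = (1/6) Σ_{s∈{0,1,+,−,+i,−i}} |s⟩⟨s|⊗|s̄⟩⟨s̄| on S⊗R, where |0⟩,|1⟩,|±⟩ = (|0⟩±|1⟩)/√2, |±i⟩ = (|0⟩±i|1⟩)/√2 are the six Pauli eigenstates and {|s̄⟩} is an orthonormal basis of a six-dimensional classical system R. Then R_ext^{E_{0/1},β_XYZ}(|0̃⟩⟨0̃|) = (|0⟩⟨0| + 1_S)/3 and R_ext^{E_{0/1},β_XYZ}(|1̃⟩⟨1̃|) = (|1⟩⟨1| + 1_S)/3. -/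

import Mathlib

open Matrix
open scoped Kronecker ComplexOrder


open Classical in
/-- The positive semidefinite square root of a matrix (zero if not PSD). -/
noncomputable def msqrt {n : Type*} [Fintype n] [DecidableEq n] (A : Matrix n n ℂ) :
    Matrix n n ℂ :=
  if h : A.PosSemidef then
    h.1.eigenvectorUnitary.1 * diagonal (((↑) : ℝ → ℂ) ∘ Real.sqrt ∘ h.1.eigenvalues) *
      (star h.1.eigenvectorUnitary : Matrix n n ℂ)
  else 0

/-- `A^{-1/2}`: the (nonsingular) inverse of the PSD square root. -/
noncomputable def invsqrt {n : Type*} [Fintype n] [DecidableEq n] (A : Matrix n n ℂ) :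
    Matrix n n ℂ :=
  (msqrt A)⁻¹

/-- Partial trace over the second factor `R`. -/
noncomputable def ptraceR {S R : Type*} [Fintype R] (M : Matrix (S × R) (S × R) ℂ) : Matrix S S ℂ :=
  Matrix.of fun s s' => ∑ r, M (s, r) (s', r)

/-- A density matrix: positive semidefinite with unit trace. -/
def IsDensity {n : Type*} [Fintype n] (A : Matrix n n ℂ) : Prop :=
  A.PosSemidef ∧ A.trace = 1

/-- The Choi matrix of a linear map between matrix algebras. -/
def choi {S T : Type*} [Fintype S] [DecidableEq S]
    (E : Matrix S S ℂ →ₗ[ℂ] Matrix T T ℂ) : Matrix (S × T) (S × T) ℂ :=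
  Matrix.of fun p q => E (Matrix.single p.1 q.1 1) p.2 q.2

/-- Completely positive trace-preserving map. -/
def IsCPTP {S T : Type*} [Fintype S] [DecidableEq S] [Fintype T]
    (E : Matrix S S ℂ →ₗ[ℂ] Matrix T T ℂ) : Prop :=
  (∀ X, (E X).trace = X.trace) ∧ (choi E).PosSemidef

/-- The Hilbert-Schmidt adjoint `E†`, satisfying `Tr[E(X)† Y] = Tr[X† E†(Y)]`. -/
noncomputable def adjMap {S T : Type*} [Fintype S] [DecidableEq S] [Fintype T]
    (E : Matrix S S ℂ →ₗ[ℂ] Matrix T T ℂ) (Y : Matrix T T ℂ) : Matrix S S ℂ :=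
  Matrix.of fun i j => ((E (Matrix.single i j 1))ᴴ * Y).trace

/-- The original Petz map `R^{E,βS}(σ) = √βS E†(E(βS)^{-1/2} σ E(βS)^{-1/2}) √βS`. -/
noncomputable def petz {S T : Type*} [Fintype S] [DecidableEq S] [Fintype T] [DecidableEq T]
    (E : Matrix S S ℂ →ₗ[ℂ] Matrix T T ℂ) (βS : Matrix S S ℂ) (σ : Matrix T T ℂ) :
    Matrix S S ℂ :=
  msqrt βS * adjMap E (invsqrt (E βS) * σ * invsqrt (E βS)) * msqrt βS

/-- The prior-extended Petz map `R^{E⊗Tr,β}`. -/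
noncomputable def petzExt {S R T : Type*} [Fintype S] [DecidableEq S]
    [Fintype R] [DecidableEq R] [Fintype T] [DecidableEq T]
    (E : Matrix S S ℂ →ₗ[ℂ] Matrix T T ℂ) (β : Matrix (S × R) (S × R) ℂ)
    (σ : Matrix T T ℂ) : Matrix (S × R) (S × R) ℂ :=
  msqrt β *
    (adjMap E (invsqrt (E (ptraceR β)) * σ * invsqrt (E (ptraceR β))) ⊗ₖ (1 : Matrix R R ℂ)) *
    msqrt β

/-- The retrodiction map `R_ext^{E,β} = Tr_R ∘ R^{E⊗Tr,β}`. -/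
noncomputable def retroExt {S R T : Type*} [Fintype S] [DecidableEq S]
    [Fintype R] [DecidableEq R] [Fintype T] [DecidableEq T]
    (E : Matrix S S ℂ →ₗ[ℂ] Matrix T T ℂ) (β : Matrix (S × R) (S × R) ℂ)
    (σ : Matrix T T ℂ) : Matrix S S ℂ :=
  ptraceR (petzExt E β σ)

/-- Two beliefs are equivalent if they induce the same retrodiction map for all channels. -/
def EquivBeliefs {S R₁ R₂ : Type*} [Fintype S] [DecidableEq S]
    [Fintype R₁] [DecidableEq R₁] [Fintype R₂] [DecidableEq R₂]
    (β : Matrix (S × R₁) (S × R₁) ℂ) (γ : Matrix (S × R₂) (S × R₂) ℂ) : Prop :=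
  ∀ (T : Type) (_ : Fintype T) (_ : DecidableEq T)
    (E : Matrix S S ℂ →ₗ[ℂ] Matrix T T ℂ),
    IsCPTP E → (E (ptraceR β)).PosDef → (E (ptraceR γ)).PosDef →
    ∀ σ : Matrix T T ℂ, retroExt E β σ = retroExt E γ σ

/-- Measurement in the basis `{v₀, v₁}`, recorded in the standard basis of a classical bit. -/
noncomputable def meas2 (v₀ v₁ : Fin 2 → ℂ) :
    Matrix (Fin 2) (Fin 2) ℂ →ₗ[ℂ] Matrix (Fin 2) (Fin 2) ℂ where
  toFun ρ := (∑ i, ∑ j, star (v₀ i) * ρ i j * v₀ j) • Matrix.single 0 0 1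
      + (∑ i, ∑ j, star (v₁ i) * ρ i j * v₁ j) • Matrix.single 1 1 1
  map_add' x y := by
    simp only [Matrix.add_apply, mul_add, add_mul, Finset.sum_add_distrib, add_smul]
    abel
  map_smul' c x := by
    have h : ∀ v : Fin 2 → ℂ,
        (∑ i, ∑ j, star (v i) * ((c • x) i j) * v j)
          = c * ∑ i, ∑ j, star (v i) * x i j * v j := by
      intro v
      rw [Finset.mul_sum]
      refine Finset.sum_congr rfl fun i _ => ?_
      rw [Finset.mul_sum]
      refine Finset.sum_congr rfl fun j _ => ?_
      simp only [Matrix.smul_apply, smul_eq_mul]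
      ring
    simp only [RingHom.id_apply, smul_add, smul_smul]
    rw [h, h]

/-- The qubit state `|0⟩`. -/
noncomputable def q0 : Fin 2 → ℂ := ![1, 0]
/-- The qubit state `|1⟩`. -/
noncomputable def q1 : Fin 2 → ℂ := ![0, 1]
/-- The qubit state `|+⟩ = (|0⟩+|1⟩)/√2`. -/
noncomputable def qP : Fin 2 → ℂ := ![(Real.sqrt 2 : ℂ)⁻¹, (Real.sqrt 2 : ℂ)⁻¹]
/-- The qubit state `|−⟩ = (|0⟩−|1⟩)/√2`. -/
noncomputable def qM : Fin 2 → ℂ := ![(Real.sqrt 2 : ℂ)⁻¹, -(Real.sqrt 2 : ℂ)⁻¹]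
/-- The qubit state `|+i⟩ = (|0⟩+i|1⟩)/√2`. -/
noncomputable def qPi : Fin 2 → ℂ := ![(Real.sqrt 2 : ℂ)⁻¹, Complex.I * (Real.sqrt 2 : ℂ)⁻¹]
/-- The qubit state `|−i⟩ = (|0⟩−i|1⟩)/√2`. -/
noncomputable def qMi : Fin 2 → ℂ := ![(Real.sqrt 2 : ℂ)⁻¹, -(Complex.I * (Real.sqrt 2 : ℂ)⁻¹)]
/-- The rank-one projector `|v⟩⟨v|`. -/
noncomputable def proj (v : Fin 2 → ℂ) : Matrix (Fin 2) (Fin 2) ℂ :=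
  Matrix.vecMulVec v (star v)

/-- The six Pauli eigenstates indexed by `Fin 6`. -/
noncomputable def pauliState : Fin 6 → Fin 2 → ℂ := ![q0, q1, qP, qM, qPi, qMi]

/-- The Pauli-eigenstate ensemble belief `β_XYZ` on `S ⊗ R` with `R` six-dimensional. -/
noncomputable def betaXYZ : Matrix (Fin 2 × Fin 6) (Fin 2 × Fin 6) ℂ :=
  (1 / 6 : ℂ) • ∑ s : Fin 6, proj (pauliState s) ⊗ₖ Matrix.single s s (1 : ℂ)

/-! ### Auxiliary lemmas -/

section Aux

open Finset

open scoped MatrixOrder in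
lemma msqrt_eq {n : Type*} [Fintype n] [DecidableEq n] {A B : Matrix n n ℂ}
    (hA : A.PosSemidef) (hB : B.PosSemidef) (h : B * B = A) : msqrt A = B := by
  rw [msqrt, dif_pos hA]
  rw [← CFC.sqrt_unique (a := A) h hB.nonneg, CFC.sqrt_eq_cfc, cfc_nnreal_eq_real _ A,
    hA.1.cfc_eq, IsHermitian.cfc, Unitary.conjStarAlgAut_apply]
  congr 3
  funext i
  simp [Real.coe_sqrt, hA.eigenvalues_nonneg i]

lemma vecMulVec_psd {n : Type*} [Fintype n] (v : n → ℂ) :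
    (Matrix.vecMulVec v (star v)).PosSemidef := by
  exact posSemidef_vecMulVec_self_star v

lemma smul_psd (c : ℝ) (hc : 0 ≤ c) {n : Type*} [Fintype n] {M : Matrix n n ℂ}
    (hM : M.PosSemidef) : ((c : ℂ) • M).PosSemidef := by
  exact hM.smul (by exact_mod_cast hc)

lemma psd_sum {n ι : Type*} [Fintype n] [Fintype ι] (f : ι → Matrix n n ℂ)
    (h : ∀ s, (f s).PosSemidef) : (∑ s, f s).PosSemidef := by
  classical
  refine Finset.sum_induction f _ (fun a b ha hb => ha.add hb) Matrix.PosSemidef.zero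
    (fun s _ => h s)

end Aux
section Pauli
open Finset

lemma sqrt2_inv_sq : ((Real.sqrt 2 : ℂ))⁻¹ * ((Real.sqrt 2 : ℂ))⁻¹ = 2⁻¹ := by
  rw [← mul_inv]; norm_cast; rw [Real.mul_self_sqrt (by norm_num)]; norm_num

lemma sqrt2_sq : (Real.sqrt 2 : ℂ) ^ 2 = 2 := by
  norm_cast
  rw [Real.sq_sqrt (by norm_num)]

lemma pauli_norm (s : Fin 6) : star (pauliState s) ⬝ᵥ pauliState s = 1 := by
  have tac : ∀ a b : ℂ, (starRingEnd ℂ) a * a + (starRingEnd ℂ) b * b = 1 →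
      star (![a, b]) ⬝ᵥ ![a, b] = 1 := by
    intro a b h
    simpa [dotProduct, Fin.sum_univ_two] using h
  fin_cases s
  · exact tac 1 0 (by simp)
  · exact tac 0 1 (by simp)
  · refine tac _ _ ?_
    simp [map_inv₀, Complex.conj_ofReal, sqrt2_inv_sq]
    norm_num
  · refine tac _ _ ?_
    simp [map_inv₀, Complex.conj_ofReal, sqrt2_inv_sq]
    norm_num
  · refine tac _ _ ?_
    simp [map_inv₀, Complex.conj_ofReal, Complex.conj_I]
    ring_nf
    rw [Complex.I_sq, inv_pow, sqrt2_sq]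
    norm_num
  · refine tac _ _ ?_
    simp [map_inv₀, Complex.conj_ofReal, Complex.conj_I]
    ring_nf
    rw [Complex.I_sq, inv_pow, sqrt2_sq]
    norm_num

end Pauli
section ProjB
open Finset

lemma proj_mul_proj {v : Fin 2 → ℂ} (h : star v ⬝ᵥ v = 1) : proj v * proj v = proj v := by
  have h' : ∑ k, star (v k) * v k = 1 := by simpa [dotProduct] using h
  ext i j
  simp only [proj, Matrix.mul_apply, Matrix.vecMulVec_apply, Pi.star_apply]
  calc ∑ k, v i * star (v k) * (v k * star (v j))
      = (v i * star (v j)) * ∑ k, star (v k) * v k := by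
        rw [Finset.mul_sum]; exact Finset.sum_congr rfl fun k _ => by ring
    _ = v i * star (v j) := by rw [h', mul_one]

lemma kron_proj_psd (v : Fin 2 → ℂ) (s : Fin 6) :
    (proj v ⊗ₖ Matrix.single s s (1:ℂ)).PosSemidef := by
  have key : proj v ⊗ₖ Matrix.single s s (1:ℂ)
      = Matrix.vecMulVec (fun p => v p.1 * (if p.2 = s then 1 else 0))
          (star fun p => v p.1 * (if p.2 = s then 1 else 0)) := by
    ext ⟨i,r⟩ ⟨j,r'⟩
    simp only [Matrix.kroneckerMap_apply, proj, Matrix.vecMulVec_apply, Matrix.single,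
      Matrix.of_apply, Pi.star_apply, star_mul']
    split_ifs <;> simp_all <;> ring
  rw [key]; exact vecMulVec_psd _

lemma betaXYZ_psd : betaXYZ.PosSemidef := by
  rw [betaXYZ, show (1/6:ℂ) = ((1/6:ℝ):ℂ) by norm_num]
  exact smul_psd _ (by norm_num) (psd_sum _ fun s => kron_proj_psd _ s)

noncomputable def sqB : Matrix (Fin 2 × Fin 6) (Fin 2 × Fin 6) ℂ :=
  ((Real.sqrt 6 : ℝ) : ℂ)⁻¹ • ∑ s : Fin 6, proj (pauliState s) ⊗ₖ Matrix.single s s (1 : ℂ)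

lemma sqB_psd : sqB.PosSemidef := by
  rw [sqB, show (((Real.sqrt 6 : ℝ) : ℂ))⁻¹ = (((Real.sqrt 6)⁻¹ : ℝ) : ℂ) by push_cast; ring]
  exact smul_psd _ (by positivity) (psd_sum _ fun s => kron_proj_psd _ s)

lemma sqB_sq : sqB * sqB = betaXYZ := by
  rw [sqB, betaXYZ, Matrix.smul_mul, Matrix.mul_smul, smul_smul]
  have hc : (((Real.sqrt 6 : ℝ) : ℂ))⁻¹ * (((Real.sqrt 6 : ℝ) : ℂ))⁻¹ = 1/6 := by
    rw [← mul_inv]; norm_cast; rw [Real.mul_self_sqrt (by norm_num)]; norm_num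
  rw [hc]
  congr 1
  rw [Finset.sum_mul]
  refine Finset.sum_congr rfl fun s _ => ?_
  rw [Finset.mul_sum, Finset.sum_eq_single s]
  · rw [← Matrix.mul_kronecker_mul, proj_mul_proj (pauli_norm s), Matrix.single_mul_single_same,
      one_mul]
  · intro t _ hts
    rw [← Matrix.mul_kronecker_mul, Matrix.single_mul_single_of_ne (h := Ne.symm hts),
      Matrix.kronecker_zero]
  · intro h; exact absurd (Finset.mem_univ s) h

lemma msqrt_betaXYZ : msqrt betaXYZ = sqB := msqrt_eq betaXYZ_psd sqB_psd sqB_sq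

end ProjB
section PtraceE
open Finset

lemma ptraceR_smul {S R : Type*} [Fintype R] (c : ℂ) (M : Matrix (S × R) (S × R) ℂ) :
    ptraceR (c • M) = c • ptraceR M := by
  ext i j; simp [ptraceR, Finset.mul_sum]

lemma ptraceR_sum {S R ι : Type*} [Fintype R] [Fintype ι] (f : ι → Matrix (S × R) (S × R) ℂ) :
    ptraceR (∑ s, f s) = ∑ s, ptraceR (f s) := by
  ext i j
  simp only [ptraceR, Matrix.of_apply, Matrix.sum_apply]
  rw [Finset.sum_comm]

lemma ptraceR_kron (M : Matrix (Fin 2) (Fin 2) ℂ) (s : Fin 6) :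
    ptraceR (M ⊗ₖ Matrix.single s s (1:ℂ)) = M := by
  ext i j
  simp [ptraceR, Matrix.kroneckerMap_apply, Matrix.single, Matrix.of_apply]

@[simp] lemma pauliState_0 : pauliState 0 = q0 := rfl
@[simp] lemma pauliState_1 : pauliState 1 = q1 := rfl
@[simp] lemma pauliState_2 : pauliState 2 = qP := rfl
@[simp] lemma pauliState_3 : pauliState 3 = qM := rfl
@[simp] lemma pauliState_4 : pauliState 4 = qPi := rfl
@[simp] lemma pauliState_5 : pauliState 5 = qMi := rfl

lemma sum_proj : ∑ s, proj (pauliState s) = (3:ℂ) • 1 := by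
  ext i j
  simp only [Matrix.sum_apply, Fin.sum_univ_six, pauliState_0, pauliState_1, pauliState_2,
    pauliState_3, pauliState_4, pauliState_5]
  fin_cases i <;> fin_cases j <;>
    simp [proj, Matrix.vecMulVec_apply, q0, q1, qP, qM, qPi, qMi, Matrix.one_apply,
      map_inv₀, Complex.conj_ofReal, Complex.conj_I, sqrt2_inv_sq] <;>
    ring_nf <;>
    first
      | rfl
      | (rw [inv_pow, sqrt2_sq]; ring_nf; norm_num)
      | (rw [Complex.I_sq, inv_pow, sqrt2_sq]; ring_nf; norm_num)

lemma ptrace_beta : ptraceR betaXYZ = (2⁻¹:ℂ) • 1 := by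
  rw [betaXYZ, ptraceR_smul, ptraceR_sum]
  simp_rw [ptraceR_kron]
  rw [sum_proj, smul_smul]
  norm_num

lemma meas2_apply (X : Matrix (Fin 2) (Fin 2) ℂ) :
    meas2 q0 q1 X = (∑ i, ∑ j, star (q0 i) * X i j * q0 j)
        • Matrix.single (0 : Fin 2) 0 (1:ℂ)
      + (∑ i, ∑ j, star (q1 i) * X i j * q1 j)
        • Matrix.single (1 : Fin 2) 1 (1:ℂ) := rfl

lemma meas2_one : meas2 q0 q1 (1 : Matrix (Fin 2) (Fin 2) ℂ) = 1 := by
  rw [meas2_apply]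
  simp only [q0, q1, Fin.sum_univ_two, Matrix.one_apply]
  norm_num
  ext i j
  fin_cases i <;> fin_cases j <;> simp [Matrix.single, Matrix.one_apply]

lemma EbetaS : meas2 q0 q1 (ptraceR betaXYZ) = (2⁻¹:ℂ) • 1 := by
  rw [ptrace_beta, (meas2 q0 q1).map_smul, meas2_one]

lemma invsqrt_EbetaS :
    invsqrt (meas2 q0 q1 (ptraceR betaXYZ)) = (Real.sqrt 2 : ℂ) • 1 := by
  have hmsqrt : msqrt ((2⁻¹:ℂ) • (1 : Matrix (Fin 2) (Fin 2) ℂ))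
      = ((Real.sqrt 2 : ℂ))⁻¹ • 1 := by
    apply msqrt_eq
    · rw [show (2⁻¹:ℂ) = ((2⁻¹:ℝ):ℂ) by norm_num]
      exact smul_psd _ (by norm_num) Matrix.PosSemidef.one
    · rw [show ((Real.sqrt 2 : ℂ))⁻¹ = (((Real.sqrt 2)⁻¹:ℝ):ℂ) by push_cast; ring]
      exact smul_psd _ (by positivity) Matrix.PosSemidef.one
    · rw [smul_mul_smul_comm, one_mul, sqrt2_inv_sq]
  rw [invsqrt, EbetaS, hmsqrt]
  apply inv_eq_right_inv
  rw [smul_mul_smul_comm, one_mul, inv_mul_cancel₀ (show (Real.sqrt 2 : ℂ) ≠ 0 by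
    norm_cast; positivity), one_smul]

lemma sandwich (σ : Matrix (Fin 2) (Fin 2) ℂ) :
    ((Real.sqrt 2 : ℂ) • (1 : Matrix (Fin 2) (Fin 2) ℂ)) * σ * ((Real.sqrt 2 : ℂ) • 1)
      = (2:ℂ) • σ := by
  rw [Matrix.smul_mul, one_mul, Matrix.mul_smul, Matrix.mul_one, smul_smul]
  congr 1
  norm_cast
  rw [Real.mul_self_sqrt (by norm_num)]

lemma adjMap_smul {S T : Type*} [Fintype S] [DecidableEq S] [Fintype T]
    (E : Matrix S S ℂ →ₗ[ℂ] Matrix T T ℂ) (c : ℂ) (Y : Matrix T T ℂ) :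
    adjMap E (c • Y) = c • adjMap E Y := by
  ext i j
  simp [adjMap, Matrix.mul_smul, Matrix.trace_smul]

lemma adj_meas_00 :
    adjMap (meas2 q0 q1) (Matrix.single (0 : Fin 2) 0 (1:ℂ))
      = Matrix.single (0 : Fin 2) 0 (1:ℂ) := by
  ext i j
  fin_cases i <;> fin_cases j <;>
    simp [adjMap, meas2, Matrix.trace, Matrix.mul_apply, Matrix.single, q0, q1,
      Fin.sum_univ_two, Matrix.conjTranspose_apply, Matrix.diag, Matrix.of_apply]

lemma adj_meas_11 :
    adjMap (meas2 q0 q1) (Matrix.single (1 : Fin 2) 1 (1:ℂ))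
      = Matrix.single (1 : Fin 2) 1 (1:ℂ) := by
  ext i j
  fin_cases i <;> fin_cases j <;>
    simp [adjMap, meas2, Matrix.trace, Matrix.mul_apply, Matrix.single, q0, q1,
      Fin.sum_univ_two, Matrix.conjTranspose_apply, Matrix.diag, Matrix.of_apply]

end PtraceE
section Final
open Finset

lemma sqrt2_pow4 : (Real.sqrt 2 : ℂ) ^ 4 = 4 := by
  rw [show ((Real.sqrt 2 : ℂ)) ^ 4 = (((Real.sqrt 2 : ℂ)) ^ 2) ^ 2 by ring, sqrt2_sq]
  norm_num

lemma key_prod (A : Matrix (Fin 2) (Fin 2) ℂ) :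
    sqB * (A ⊗ₖ (1 : Matrix (Fin 6) (Fin 6) ℂ)) * sqB
      = (6⁻¹:ℂ) • ∑ s, (proj (pauliState s) * A * proj (pauliState s))
          ⊗ₖ Matrix.single s s (1:ℂ) := by
  rw [sqB]
  simp only [Matrix.smul_mul, Matrix.mul_smul, smul_smul]
  have hc : (((Real.sqrt 6 : ℝ) : ℂ))⁻¹ * (((Real.sqrt 6 : ℝ) : ℂ))⁻¹ = 6⁻¹ := by
    rw [← mul_inv]; norm_cast; rw [Real.mul_self_sqrt (by norm_num)]; norm_num
  rw [hc]
  congr 1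
  rw [Finset.sum_mul, Finset.sum_mul]
  refine Finset.sum_congr rfl fun s _ => ?_
  rw [Finset.mul_sum, Finset.sum_eq_single s]
  · rw [← Matrix.mul_kronecker_mul, ← Matrix.mul_kronecker_mul, Matrix.mul_one,
      Matrix.single_mul_single_same]
    norm_num
  · intro t _ hts
    rw [← Matrix.mul_kronecker_mul, ← Matrix.mul_kronecker_mul, Matrix.mul_one,
      Matrix.single_mul_single_of_ne (h := Ne.symm hts), Matrix.kronecker_zero]
  · intro h; exact absurd (Finset.mem_univ s) h

lemma mid_apply (M N : Matrix (Fin 2) (Fin 2) ℂ) (a b i j : Fin 2) :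
    (M * Matrix.single a b (1:ℂ) * N) i j = M i a * N b j := by
  simp [Matrix.mul_apply, Matrix.single, Matrix.of_apply, Fin.sum_univ_two]
  fin_cases a <;> fin_cases b <;> simp <;> ring

lemma sum_PAP_0 :
    ∑ s, proj (pauliState s) * Matrix.single (0 : Fin 2) 0 (1:ℂ) * proj (pauliState s)
      = Matrix.single (0 : Fin 2) 0 (1:ℂ) + 1 := by
  ext i j
  simp only [Matrix.sum_apply, Fin.sum_univ_six, pauliState_0, pauliState_1, pauliState_2,
    pauliState_3, pauliState_4, pauliState_5, mid_apply]
  fin_cases i <;> fin_cases j <;>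
    simp [proj, Matrix.vecMulVec_apply, q0, q1, qP, qM, qPi, qMi, Matrix.one_apply,
      Matrix.single, map_inv₀, Complex.conj_ofReal, Complex.conj_I, sqrt2_inv_sq] <;>
    ring_nf <;>
    norm_num [sqrt2_pow4, sqrt2_sq, Complex.I_sq, inv_pow]

lemma sum_PAP_1 :
    ∑ s, proj (pauliState s) * Matrix.single (1 : Fin 2) 1 (1:ℂ) * proj (pauliState s)
      = Matrix.single (1 : Fin 2) 1 (1:ℂ) + 1 := by
  ext i j
  simp only [Matrix.sum_apply, Fin.sum_univ_six, pauliState_0, pauliState_1, pauliState_2,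
    pauliState_3, pauliState_4, pauliState_5, mid_apply]
  fin_cases i <;> fin_cases j <;>
    simp [proj, Matrix.vecMulVec_apply, q0, q1, qP, qM, qPi, qMi, Matrix.one_apply,
      Matrix.single, map_inv₀, Complex.conj_ofReal, Complex.conj_I, sqrt2_inv_sq] <;>
    ring_nf <;>
    norm_num [sqrt2_pow4, sqrt2_sq, Complex.I_sq, inv_pow]

lemma retro_final (a : Fin 2)
    (hadj : adjMap (meas2 q0 q1) (Matrix.single a a (1:ℂ))
      = Matrix.single a a (1:ℂ))
    (hsum : ∑ s, proj (pauliState s) * Matrix.single a a (1:ℂ) * proj (pauliState s)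
      = Matrix.single a a (1:ℂ) + 1) :
    retroExt (meas2 q0 q1) betaXYZ (Matrix.single a a (1 : ℂ))
      = (1 / 3 : ℂ) • (Matrix.single a a (1 : ℂ) + (1 : Matrix (Fin 2) (Fin 2) ℂ)) := by
  rw [retroExt, petzExt, msqrt_betaXYZ, invsqrt_EbetaS, sandwich, adjMap_smul, hadj,
    Matrix.smul_kronecker]
  rw [Matrix.mul_smul, Matrix.smul_mul, key_prod, ptraceR_smul, ptraceR_smul, ptraceR_sum]
  simp_rw [ptraceR_kron]
  rw [hsum, smul_smul]
  norm_num

end Final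
/-- Retrodicting a Z-basis measurement with the Pauli-eigenstate
ensemble belief gives `(|0⟩⟨0|+1)/3` and `(|1⟩⟨1|+1)/3` respectively. -/
theorem retro_measZ_pauli_ensemble :
    retroExt (meas2 q0 q1) betaXYZ (Matrix.single (0 : Fin 2) 0 (1 : ℂ))
      = (1 / 3 : ℂ) • (Matrix.single (0 : Fin 2) 0 (1 : ℂ)
          + (1 : Matrix (Fin 2) (Fin 2) ℂ)) ∧
    retroExt (meas2 q0 q1) betaXYZ (Matrix.single (1 : Fin 2) 1 (1 : ℂ))
      = (1 / 3 : ℂ) • (Matrix.single (1 : Fin 2) 1 (1 : ℂ)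
          + (1 : Matrix (Fin 2) (Fin 2) ℂ)) := by
  exact ⟨retro_final 0 adj_meas_00 sum_PAP_0, retro_final 1 adj_meas_11 sum_PAP_1⟩
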